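/- arXiv:2603.17620 — 6 statements merged into one kernel-verified Lean document; each statement's English description precedes it below -/
import Mathlib

section
/- Let M ≥ 2 be an integer, let φ, η ∈ (−π/2, π/2), θ ∈ [−π/2, π/2], and ϑ ∈ (−π/2, π/2). Then the sUPA array factor satisfies |f(φ,θ;η,ϑ)| ≤ M², and equality |f(φ,θ;η,ϑ)| = M² holds if and only if (φ,θ) = (η,ϑ). -/
open Real Complex Finset

/-- The Dirichlet kernel `H_M(x) = (1/M) ∑_{m=0}^{M-1} exp(iπ m x)`. -/
noncomputable def dirichletKernel (M : ℕ) (x : ℝ) : ℂ :=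
  (1 / (M : ℂ)) * ∑ m ∈ Finset.range M, Complex.exp (Complex.I * (Real.pi : ℂ) * (m : ℂ) * (x : ℂ))

/-- The sUPA array factor
`f(φ,θ;η,ϑ) = M² H_M(cos θ sin(φ−η)) H_M(sin θ cos ϑ − cos θ sin ϑ cos(φ−η))`. -/
noncomputable def sUPAFactor (M : ℕ) (φ θ η ϑ : ℝ) : ℂ :=
  (M : ℂ) ^ 2 * dirichletKernel M (Real.cos θ * Real.sin (φ - η)) *
    dirichletKernel M (Real.sin θ * Real.cos ϑ - Real.cos θ * Real.sin ϑ * Real.cos (φ - η))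

lemma geom_abs_lt (M : ℕ) (hM : 2 ≤ M) (z : ℂ) (hz : ‖z‖ = 1) (hz1 : z ≠ 1) :
    ‖∑ m ∈ Finset.range M, z ^ m‖ < M := by
  have hnsq : z.re * z.re + z.im * z.im = 1 := by
    have := Complex.sq_norm z
    rw [hz, Complex.normSq_apply] at this
    nlinarith
  have hre : z.re < 1 := by
    rcases lt_or_eq_of_le ((Complex.re_le_norm z).trans_eq hz) with h | h
    · exact h
    · exfalso
      apply hz1
      have him : z.im = 0 := by nlinarith
      exact Complex.ext (by simpa using h) (by simpa using him)
  have h2 : ‖1 + z‖ < 2 := by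
    have hsq : (‖1 + z‖) ^ 2 < 4 := by
      rw [Complex.sq_norm, Complex.normSq_apply]
      simp only [Complex.add_re, Complex.add_im, Complex.one_re, Complex.one_im]
      nlinarith
    nlinarith [norm_nonneg (1 + z)]
  have hsplit : ∑ m ∈ Finset.range M, z ^ m = (1 + z) + ∑ m ∈ Finset.Ico 2 M, z ^ m := by
    rw [Finset.range_eq_Ico, ← Finset.sum_Ico_consecutive _ (by norm_num) hM]
    norm_num [Finset.sum_Ico_eq_sum_range]
    ring
  rw [hsplit]
  have htail : ‖∑ m ∈ Finset.Ico 2 M, z ^ m‖ ≤ (M : ℝ) - 2 := by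
    calc ‖∑ m ∈ Finset.Ico 2 M, z ^ m‖
        ≤ ∑ m ∈ Finset.Ico 2 M, ‖z ^ m‖ := by
          exact norm_sum_le _ _
      _ = ∑ m ∈ Finset.Ico 2 M, (1:ℝ) := by
          refine Finset.sum_congr rfl fun m _ => ?_
          rw [norm_pow, hz, one_pow]
      _ = (M : ℝ) - 2 := by
          rw [Finset.sum_const, Nat.card_Ico, nsmul_eq_mul, mul_one, Nat.cast_sub hM]
          push_cast
          ring
  calc ‖(1 + z) + ∑ m ∈ Finset.Ico 2 M, z ^ m‖
      ≤ ‖1 + z‖ + ‖∑ m ∈ Finset.Ico 2 M, z ^ m‖ :=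
        norm_add_le _ _
    _ < 2 + ((M : ℝ) - 2) := by linarith
    _ = M := by ring

lemma dk_eq (M : ℕ) (x : ℝ) :
    dirichletKernel M x = (1 / (M : ℂ)) *
      ∑ m ∈ Finset.range M, (Complex.exp (Complex.I * (Real.pi : ℂ) * (x : ℂ))) ^ m := by
  unfold dirichletKernel
  congr 1
  refine Finset.sum_congr rfl fun m _ => ?_
  rw [← Complex.exp_nat_mul]
  ring_nf

lemma dk_abs (M : ℕ) (hM : 0 < M) (x : ℝ) :
    ‖dirichletKernel M x‖ =
      (1 / (M : ℝ)) * ‖∑ m ∈ Finset.range M,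
        (Complex.exp (Complex.I * (Real.pi : ℂ) * (x : ℂ))) ^ m‖ := by
  rw [dk_eq, norm_mul]
  congr 1
  rw [norm_div, norm_one, Complex.norm_natCast]

lemma dk_abs_le (M : ℕ) (hM : 0 < M) (x : ℝ) :
    ‖dirichletKernel M x‖ ≤ 1 := by
  rw [dk_abs M hM]
  have h : ‖∑ m ∈ Finset.range M,
      (Complex.exp (Complex.I * (Real.pi : ℂ) * (x : ℂ))) ^ m‖ ≤ M := by
    calc _ ≤ ∑ m ∈ Finset.range M, ‖
          (Complex.exp (Complex.I * (Real.pi : ℂ) * (x : ℂ))) ^ m‖ :=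
          norm_sum_le _ _
      _ ≤ ∑ m ∈ Finset.range M, (1:ℝ) := by
          refine Finset.sum_le_sum fun m _ => ?_
          rw [norm_pow, Complex.norm_exp]
          simp
      _ = M := by simp
  have hMpos : (0:ℝ) < M := by exact_mod_cast hM
  rw [div_mul_eq_mul_div, one_mul, div_le_one hMpos]
  exact h

lemma dk_abs_lt (M : ℕ) (hM : 2 ≤ M) (x : ℝ) (hx : |x| < 2) (hx0 : x ≠ 0) :
    ‖dirichletKernel M x‖ < 1 := by
  have hz : ‖Complex.exp (Complex.I * (Real.pi : ℂ) * (x : ℂ))‖ = 1 := by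
    rw [Complex.norm_exp]
    simp
  have hz1 : Complex.exp (Complex.I * (Real.pi : ℂ) * (x : ℂ)) ≠ 1 := by
    intro h
    rw [Complex.exp_eq_one_iff] at h
    obtain ⟨n, hn⟩ := h
    have hx2 : x = 2 * n := by
      have hI : Complex.I * (Real.pi : ℂ) * (x : ℂ) = ((Real.pi * x : ℝ) : ℂ) * Complex.I := by
        push_cast; ring
      have hr : (n : ℂ) * (2 * (Real.pi : ℂ) * Complex.I) = ((2 * n * Real.pi : ℝ) : ℂ) * Complex.I := by
        push_cast; ring
      rw [hI, hr, mul_left_inj' Complex.I_ne_zero] at hn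
      have h1 : Real.pi * x = Real.pi * (2 * n) := by
        have := Complex.ofReal_inj.mp hn; linarith
      exact mul_left_cancel₀ Real.pi_ne_zero h1
    rw [hx2] at hx hx0
    have : (n:ℝ) ≠ 0 := by intro h; apply hx0; rw [h]; ring
    have hn0 : n ≠ 0 := by exact_mod_cast Int.cast_ne_zero.mp this
    have : (1:ℝ) ≤ |(n:ℝ)| := by
      rw [← Int.cast_abs]
      exact_mod_cast Int.one_le_abs hn0
    rw [abs_mul] at hx
    simp at hx
    linarith
  have hMpos : 0 < M := by omega
  rw [dk_abs M hMpos]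
  have := geom_abs_lt M hM _ hz hz1
  have hMpos' : (0:ℝ) < M := by exact_mod_cast hMpos
  rw [div_mul_eq_mul_div, one_mul, div_lt_one hMpos']
  exact this

lemma dk_zero (M : ℕ) (hM : 0 < M) : dirichletKernel M 0 = 1 := by
  unfold dirichletKernel
  have : ∀ m ∈ Finset.range M, Complex.exp (Complex.I * (Real.pi : ℂ) * (m : ℂ) * ((0:ℝ) : ℂ)) = 1 := by
    intro m _; simp
  rw [Finset.sum_congr rfl this, Finset.sum_const, Finset.card_range]
  have hM0 : (M : ℂ) ≠ 0 := Nat.cast_ne_zero.mpr (by omega)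
  field_simp
  simp

lemma cs_sq_le_one (s C a b c : ℝ) (h1 : s^2 + C^2 = 1) (h2 : b^2 + a^2 = 1) (h3 : c^2 ≤ 1) :
    (s * a - C * b * c) ^ 2 ≤ 1 := by
  nlinarith [sq_nonneg (s * b * c + C * a),
    mul_nonneg (sq_nonneg b) (by linarith : (0:ℝ) ≤ 1 - c ^ 2),
    mul_nonneg (sq_nonneg C) (mul_nonneg (sq_nonneg b) (by linarith : (0:ℝ) ≤ 1 - c ^ 2)),
    mul_nonneg (sq_nonneg s) (mul_nonneg (sq_nonneg b) (by linarith : (0:ℝ) ≤ 1 - c ^ 2))]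

set_option maxHeartbeats 1000000 in
/-- For `M ≥ 2`, `φ, η ∈ (−π/2, π/2)`, `θ ∈ [−π/2, π/2]`, `ϑ ∈ (−π/2, π/2)`, the sUPA
array factor satisfies `|f(φ,θ;η,ϑ)| ≤ M²`, with equality iff `(φ,θ) = (η,ϑ)`. -/
theorem abs_sUPAFactor_le_max (M : ℕ) (hM : 2 ≤ M) (φ θ η ϑ : ℝ)
    (hφ : φ ∈ Set.Ioo (-(Real.pi / 2)) (Real.pi / 2))
    (hη : η ∈ Set.Ioo (-(Real.pi / 2)) (Real.pi / 2))
    (hθ : θ ∈ Set.Icc (-(Real.pi / 2)) (Real.pi / 2))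
    (hϑ : ϑ ∈ Set.Ioo (-(Real.pi / 2)) (Real.pi / 2)) :
    ‖sUPAFactor M φ θ η ϑ‖ ≤ (M : ℝ) ^ 2 ∧
      (‖sUPAFactor M φ θ η ϑ‖ = (M : ℝ) ^ 2 ↔ φ = η ∧ θ = ϑ) := by
  obtain ⟨hφ1, hφ2⟩ := hφ
  obtain ⟨hη1, hη2⟩ := hη
  obtain ⟨hθ1, hθ2⟩ := hθ
  obtain ⟨hϑ1, hϑ2⟩ := hϑ
  have hπ := Real.pi_pos
  set u := Real.cos θ * Real.sin (φ - η) with hu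
  set v := Real.sin θ * Real.cos ϑ - Real.cos θ * Real.sin ϑ * Real.cos (φ - η) with hv
  have hMpos : 0 < M := by omega
  have hMr : (0:ℝ) < (M:ℝ)^2 := by positivity
  have habs : ‖sUPAFactor M φ θ η ϑ‖ =
      (M:ℝ)^2 * (‖dirichletKernel M u‖ * ‖dirichletKernel M v‖) := by
    unfold sUPAFactor
    rw [norm_mul, norm_mul, norm_pow, Complex.norm_natCast]
    ring
  have hu1 : ‖dirichletKernel M u‖ ≤ 1 := dk_abs_le M hMpos u
  have hv1 : ‖dirichletKernel M v‖ ≤ 1 := dk_abs_le M hMpos v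
  have hun : 0 ≤ ‖dirichletKernel M u‖ := norm_nonneg _
  have hvn : 0 ≤ ‖dirichletKernel M v‖ := norm_nonneg _
  have hab : ‖dirichletKernel M u‖ * ‖dirichletKernel M v‖ ≤ 1 :=
    mul_le_one₀ hu1 hvn hv1
  have hle : ‖sUPAFactor M φ θ η ϑ‖ ≤ (M:ℝ)^2 := by
    rw [habs]
    nlinarith [hab, hMr]
  refine ⟨hle, ?_, ?_⟩
  · intro heq
    rw [habs] at heq
    have hprod : ‖dirichletKernel M u‖ * ‖dirichletKernel M v‖ = 1 :=
      mul_left_cancel₀ (ne_of_gt hMr) (heq.trans (mul_one _).symm)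
    have hub : |u| ≤ 1 := by
      rw [hu, abs_mul]
      exact mul_le_one₀ (Real.abs_cos_le_one θ) (abs_nonneg _) (Real.abs_sin_le_one _)
    have hvb : |v| ≤ 1 := by
      have h1 := Real.sin_sq_add_cos_sq θ
      have h2 := Real.sin_sq_add_cos_sq ϑ
      have h3 : Real.cos (φ - η) ^ 2 ≤ 1 := by
        nlinarith [Real.abs_cos_le_one (φ - η), abs_nonneg (Real.cos (φ - η)),
          _root_.sq_abs (Real.cos (φ - η))]
      have hv2 : v ^ 2 ≤ 1 := by
        rw [hv]
        exact cs_sq_le_one _ _ _ _ _ h1 h2 h3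
      calc |v| = |v| * 1 := (mul_one _).symm
        _ ≤ 1 := by nlinarith [abs_nonneg v, _root_.sq_abs v]
    have huabs1 : ‖dirichletKernel M u‖ = 1 :=
      le_antisymm hu1 (hprod ▸ mul_le_of_le_one_right hun hv1)
    have hvabs1 : ‖dirichletKernel M v‖ = 1 := by
      refine le_antisymm hv1 ?_
      have hprod' : ‖dirichletKernel M v‖ * ‖dirichletKernel M u‖ = 1 := by
        rw [mul_comm]; exact hprod
      exact hprod' ▸ mul_le_of_le_one_right hvn hu1
    have hu0 : u = 0 := by
      by_contra h
      exact absurd huabs1 (ne_of_lt (dk_abs_lt M hM u (lt_of_le_of_lt hub (by norm_num)) h))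
    have hv0 : v = 0 := by
      by_contra h
      exact absurd hvabs1 (ne_of_lt (dk_abs_lt M hM v (lt_of_le_of_lt hvb (by norm_num)) h))
    have hcosθ : 0 ≤ Real.cos θ := Real.cos_nonneg_of_mem_Icc ⟨hθ1, hθ2⟩
    have hcosϑ : 0 < Real.cos ϑ := Real.cos_pos_of_mem_Ioo ⟨hϑ1, hϑ2⟩
    rcases eq_or_lt_of_le hcosθ with hc0 | hcpos
    · exfalso
      have hs : Real.sin θ ≠ 0 := by
        intro hs
        have := Real.sin_sq_add_cos_sq θ
        rw [hs, ← hc0] at this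
        norm_num at this
      apply hs
      have hveq : Real.sin θ * Real.cos ϑ = 0 := by
        have := hv.symm.trans hv0
        rw [← hc0] at this
        linarith
      rcases mul_eq_zero.mp hveq with h | h
      · exact h
      · exact absurd h (ne_of_gt hcosϑ)
    · have hsin0 : Real.sin (φ - η) = 0 := by
        rcases mul_eq_zero.mp (hu.symm.trans hu0) with h | h
        · exact absurd h (ne_of_gt hcpos)
        · exact h
      have hφη : φ = η := by
        have hlt1 : -Real.pi < φ - η := by linarith
        have hlt2 : φ - η < Real.pi := by linarith
        have := (Real.sin_eq_zero_iff_of_lt_of_lt hlt1 hlt2).mp hsin0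
        linarith
      have hcos1 : Real.cos (φ - η) = 1 := by rw [hφη]; simp
      have hvv : Real.sin (θ - ϑ) = 0 := by
        rw [Real.sin_sub]
        have := hv.symm.trans hv0
        rw [hcos1] at this
        linarith
      have hθϑ : θ = ϑ := by
        have hlt1 : -Real.pi < θ - ϑ := by linarith
        have hlt2 : θ - ϑ < Real.pi := by linarith
        have := (Real.sin_eq_zero_iff_of_lt_of_lt hlt1 hlt2).mp hvv
        linarith
      exact ⟨hφη, hθϑ⟩
  · rintro ⟨h1, h2⟩
    have hu0 : u = 0 := by rw [hu, h1, sub_self, Real.sin_zero, mul_zero]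
    have hv0 : v = 0 := by rw [hv, h1, h2, sub_self, Real.cos_zero]; ring
    rw [habs, hu0, hv0, dk_zero M hMpos]
    simp
end

section
/- Let M ≥ 2 be an integer and let φ, θ, η, ϑ be real angles with θ, ϑ ∈ [−π/2, π/2]. Then the sUPA array factor satisfies f(φ,θ;η,ϑ) = 0 if and only if there exists a nonzero integer p with cos θ·sin(φ−η) = 2p/M, or there exists a nonzero integer q with sin θ·cos ϑ − cos θ·sin ϑ·cos(φ−η) = 2q/M. (Since both arguments have absolute value at most 1, any such p and q automatically satisfy |p| ≤ M/2 and |q| ≤ M/2.) -/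
open Real Complex Finset

lemma exp_pi_mul_eq_one_iff (x : ℝ) :
    Complex.exp (Complex.I * (Real.pi : ℂ) * (x : ℂ)) = 1 ↔ ∃ n : ℤ, x = 2 * n := by
  rw [Complex.exp_eq_one_iff]
  constructor
  · rintro ⟨n, h⟩
    refine ⟨n, ?_⟩
    have hne : (Complex.I * (Real.pi : ℂ)) ≠ 0 := by
      simp [Complex.I_ne_zero, Complex.ofReal_ne_zero, Real.pi_ne_zero]
    have h2 : (Complex.I * (Real.pi : ℂ)) * (x : ℂ) =
        (Complex.I * (Real.pi : ℂ)) * (2 * (n : ℂ)) := by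
      linear_combination h
    have h3 : (x : ℂ) = 2 * (n : ℂ) := mul_left_cancel₀ hne h2
    exact_mod_cast h3
  · rintro ⟨n, h⟩
    refine ⟨n, ?_⟩
    rw [h]; push_cast; ring

lemma dirichletKernel_eq_zero_iff (M : ℕ) (hM : 2 ≤ M) (x : ℝ) (hx : |x| ≤ 1) :
    dirichletKernel M x = 0 ↔ ∃ p : ℤ, p ≠ 0 ∧ x = 2 * p / M := by
  have hM0 : (M : ℂ) ≠ 0 := Nat.cast_ne_zero.mpr (by omega)
  have hMR : (M : ℝ) ≠ 0 := Nat.cast_ne_zero.mpr (by omega)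
  have hsum : dirichletKernel M x =
      (1 / (M : ℂ)) * ∑ m ∈ Finset.range M, (Complex.exp (Complex.I * (Real.pi : ℂ) * x)) ^ m := by
    unfold dirichletKernel
    congr 1
    refine Finset.sum_congr rfl fun m _ => ?_
    rw [← Complex.exp_nat_mul]
    ring_nf
  by_cases hx0 : x = 0
  · subst hx0
    have hone : dirichletKernel M 0 = 1 := by
      rw [hsum]
      simp only [Complex.ofReal_zero, mul_zero, Complex.exp_zero, one_pow,
        Finset.sum_const, Finset.card_range, nsmul_eq_mul, mul_one]
      field_simp
    rw [hone]
    simp only [one_ne_zero, false_iff]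
    rintro ⟨p, hp, hpe⟩
    apply hp
    field_simp at hpe
    exact_mod_cast (by linarith : (p : ℝ) = 0)
  · set r := Complex.exp (Complex.I * (Real.pi : ℂ) * x) with hr
    have hr1 : r ≠ 1 := by
      intro h
      rcases (exp_pi_mul_eq_one_iff x).mp h with ⟨n, hn⟩
      have hn0 : n ≠ 0 := by rintro rfl; simp at hn; exact hx0 hn
      have h1n : (1 : ℝ) ≤ |(n : ℝ)| := by
        have := Int.one_le_abs hn0
        calc (1:ℝ) ≤ ((|n| : ℤ) : ℝ) := by exact_mod_cast this
        _ = |(n:ℝ)| := by push_cast; ring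
      have h2 : |x| = 2 * |(n : ℝ)| := by
        rw [hn, _root_.abs_mul]
        norm_num
      rw [h2] at hx
      linarith
    have hgeom : ∑ m ∈ Finset.range M, r ^ m = (r ^ M - 1) / (r - 1) := geom_sum_eq hr1 M
    have hrM : r ^ M = Complex.exp (Complex.I * (Real.pi : ℂ) * ((M * x : ℝ) : ℂ)) := by
      rw [hr, ← Complex.exp_nat_mul]
      push_cast
      ring_nf
    constructor
    · intro h
      rw [hsum, hgeom] at h
      have h2 : (r ^ M - 1) / (r - 1) = 0 := by
        rcases mul_eq_zero.mp h with h' | h'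
        · exact absurd h' (by simp [hM0])
        · exact h'
      have h3 : r ^ M = 1 := by
        rcases div_eq_zero_iff.mp h2 with h' | h'
        · exact sub_eq_zero.mp h'
        · exact absurd (sub_eq_zero.mp h') hr1
      rw [hrM] at h3
      rcases (exp_pi_mul_eq_one_iff (M * x)).mp h3 with ⟨q, hq⟩
      refine ⟨q, ?_, ?_⟩
      · rintro rfl
        simp at hq
        rcases hq with h' | h'
        · omega
        · exact hx0 h'
      · field_simp
        linarith [hq]
    · rintro ⟨p, hp, hpe⟩
      rw [hsum, hgeom]
      have hMx : (M : ℝ) * x = 2 * p := by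
        rw [hpe]; field_simp
      have h1 : r ^ M = 1 := by
        rw [hrM]
        exact (exp_pi_mul_eq_one_iff (M * x)).mpr ⟨p, hMx⟩
      rw [h1]
      simp

/-- For `M ≥ 2` and `θ, ϑ ∈ [−π/2, π/2]`, the sUPA array factor vanishes iff
`cos θ sin(φ−η) = 2p/M` for some nonzero integer `p`, or
`sin θ cos ϑ − cos θ sin ϑ cos(φ−η) = 2q/M` for some nonzero integer `q`. -/
theorem sUPAFactor_eq_zero_iff (M : ℕ) (hM : 2 ≤ M) (φ θ η ϑ : ℝ)
    (hθ : θ ∈ Set.Icc (-(Real.pi / 2)) (Real.pi / 2))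
    (hϑ : ϑ ∈ Set.Icc (-(Real.pi / 2)) (Real.pi / 2)) :
    sUPAFactor M φ θ η ϑ = 0 ↔
      (∃ p : ℤ, p ≠ 0 ∧ Real.cos θ * Real.sin (φ - η) = 2 * p / M) ∨
      (∃ q : ℤ, q ≠ 0 ∧
        Real.sin θ * Real.cos ϑ - Real.cos θ * Real.sin ϑ * Real.cos (φ - η) = 2 * q / M) := by
  have hM0 : ((M : ℂ) ^ 2) ≠ 0 := pow_ne_zero 2 (Nat.cast_ne_zero.mpr (by omega))
  have hb : 0 ≤ Real.cos θ := Real.cos_nonneg_of_mem_Icc hθ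
  have hv : 0 ≤ Real.cos ϑ := Real.cos_nonneg_of_mem_Icc hϑ
  have hx1 : |Real.cos θ * Real.sin (φ - η)| ≤ 1 := by
    rw [_root_.abs_mul]
    calc |Real.cos θ| * |Real.sin (φ - η)| ≤ 1 * 1 :=
          mul_le_mul (Real.abs_cos_le_one θ) (Real.abs_sin_le_one _) (abs_nonneg _) zero_le_one
      _ = 1 := one_mul 1
  have hx2 : |Real.sin θ * Real.cos ϑ - Real.cos θ * Real.sin ϑ * Real.cos (φ - η)| ≤ 1 := by
    set c := Real.cos (φ - η) with hcdef
    have hc : |c| ≤ 1 := Real.abs_cos_le_one _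
    have h1 := Real.sin_sq_add_cos_sq θ
    have h2 := Real.sin_sq_add_cos_sq ϑ
    have hc2 : c ^ 2 ≤ 1 := (sq_le_one_iff_abs_le_one c).mpr hc
    have hE : (Real.sin θ * Real.cos ϑ - Real.cos θ * Real.sin ϑ * c) ^ 2 ≤ 1 := by
      nlinarith [sq_nonneg (Real.sin θ * Real.sin ϑ + Real.cos θ * c * Real.cos ϑ),
        mul_nonneg (mul_nonneg hb hb) (sub_nonneg.mpr hc2)]
    exact (sq_le_one_iff_abs_le_one _).mp hE
  unfold sUPAFactor
  rw [mul_assoc, mul_eq_zero, mul_eq_zero]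
  simp only [hM0, false_or]
  rw [dirichletKernel_eq_zero_iff M hM _ hx1, dirichletKernel_eq_zero_iff M hM _ hx2]
end

section
/- Let M ≥ 2 be an integer, let φ_p, θ_q ∈ (−π/2, π/2) with |sin φ_p| ≤ cos θ_q, and let φ, θ ∈ [−π/2, π/2]. Then the KPC beam factor satisfies |f_BF(φ,θ;φ_p,θ_q)| ≤ M², and equality |f_BF(φ,θ;φ_p,θ_q)| = M² holds if and only if φ = arcsin(sin φ_p / cos θ_q) and θ = θ_q. -/
open Real Complex Finset

noncomputable def expSum (M : ℕ) (x : ℝ) : ℂ :=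
  ∑ m ∈ Finset.range M, Complex.exp (Complex.I * (Real.pi : ℂ) * (m : ℂ) * (x : ℂ))

lemma term_abs (m : ℕ) (x : ℝ) :
    ‖Complex.exp (Complex.I * (Real.pi : ℂ) * (m : ℂ) * (x : ℂ))‖ = 1 := by
  have h : Complex.I * (Real.pi : ℂ) * (m : ℂ) * (x : ℂ) = ((Real.pi * m * x : ℝ) : ℂ) * Complex.I := by
    push_cast; ring
  rw [h, Complex.norm_exp_ofReal_mul_I]

lemma expSum_abs_le (M : ℕ) (x : ℝ) : ‖expSum M x‖ ≤ M := by
  calc ‖expSum M x‖ ≤ ∑ m ∈ Finset.range M, ‖Complex.exp (Complex.I * (Real.pi : ℂ) * (m : ℂ) * (x : ℂ))‖ :=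
        norm_sum_le _ _
    _ = M := by simp [term_abs]

lemma expSum_zero (M : ℕ) : expSum M 0 = M := by
  simp [expSum]

lemma x_eq_zero (M : ℕ) (hM : 2 ≤ M) (x : ℝ) (hx : |x| < 2)
    (h : ‖expSum M x‖ = M) : x = 0 := by
  set w : ℂ := Complex.exp (Complex.I * (Real.pi : ℂ) * (x : ℂ)) with hw
  have hterm : ∀ m : ℕ, Complex.exp (Complex.I * (Real.pi : ℂ) * (m : ℂ) * (x : ℂ)) = w ^ m := by
    intro m
    rw [hw, ← Complex.exp_nat_mul]
    ring_nf
  have habs_w : ‖w‖ = 1 := by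
    have := term_abs 1 x
    simpa [hterm 1] using this
  have hsplit : expSum M x = (1 + w) + ∑ m ∈ Finset.Ico 2 M, w ^ m := by
    rw [expSum]
    simp_rw [hterm]
    rw [Finset.range_eq_Ico, ← Finset.sum_Ico_consecutive _ (by norm_num) hM]
    norm_num [Finset.sum_Ico_eq_sum_range]
    ring
  have htail : ‖∑ m ∈ Finset.Ico 2 M, w ^ m‖ ≤ (M : ℝ) - 2 := by
    calc ‖∑ m ∈ Finset.Ico 2 M, w ^ m‖ ≤ ∑ m ∈ Finset.Ico 2 M, ‖w ^ m‖ :=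
        norm_sum_le _ _
      _ = (M : ℝ) - 2 := by
          simp only [norm_pow, habs_w, one_pow]
          rw [Finset.sum_const, Nat.card_Ico, nsmul_eq_mul, mul_one, Nat.cast_sub hM]
          norm_num
  -- |1 + w| ≥ 2
  have h2 : (2 : ℝ) ≤ ‖1 + w‖ := by
    have := norm_add_le (1 + w) (∑ m ∈ Finset.Ico 2 M, w ^ m)
    rw [← hsplit, h] at this
    linarith
  -- hence Re w = 1 and w = 1
  have hre : w.re ≤ 1 := by
    have := Complex.re_le_norm w
    rwa [habs_w] at this
  have hsq : ‖1 + w‖ ^ 2 = 2 + 2 * w.re := by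
    rw [Complex.sq_norm, Complex.normSq_apply]
    have : w.re ^ 2 + w.im ^ 2 = 1 := by
      have := Complex.sq_norm w
      rw [habs_w, Complex.normSq_apply] at this
      nlinarith
    simp [Complex.add_re, Complex.add_im]
    nlinarith
  have hre1 : w.re = 1 := by nlinarith [norm_nonneg (1 + w)]
  have him : w.im = 0 := by
    have := Complex.sq_norm w
    rw [habs_w, Complex.normSq_apply, hre1] at this
    nlinarith
  have hw1 : w = 1 := Complex.ext (by simp [hre1]) (by simp [him])
  -- exp(Iπx) = 1 → x ∈ 2ℤ
  rw [hw, Complex.exp_eq_one_iff] at hw1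
  obtain ⟨n, hn⟩ := hw1
  have him2 : Real.pi * x = n * (2 * Real.pi) := by
    have := congrArg Complex.im hn
    simpa using this
  have hx2 : x = 2 * n := by
    have hpi := Real.pi_pos
    field_simp at him2
    nlinarith
  rw [hx2] at hx
  have : |(n : ℝ)| < 1 := by
    rw [abs_mul] at hx
    norm_num at hx
    linarith [abs_nonneg (n:ℝ)]
  have hn0 : n = 0 := by
    rw [← Int.cast_abs, show (1:ℝ) = ((1:ℤ):ℝ) by norm_num, Int.cast_lt] at this
    exact Int.abs_lt_one_iff.mp this
  simp [hx2, hn0]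

/-- The KPC beam factor
`f_BF(φ,θ;φ_p,θ_q) = M² H_M(cos θ sin φ − sin φ_p) H_M(sin θ − sin θ_q)`. -/
noncomputable def kpcFactor (M : ℕ) (φ θ φp θq : ℝ) : ℂ :=
  (M : ℂ) ^ 2 * dirichletKernel M (Real.cos θ * Real.sin φ - Real.sin φp) *
    dirichletKernel M (Real.sin θ - Real.sin θq)

/-- For `M ≥ 2`, `φ_p, θ_q ∈ (−π/2, π/2)` with `|sin φ_p| ≤ cos θ_q`, and
`φ, θ ∈ [−π/2, π/2]`, the KPC beam factor satisfies `|f_BF| ≤ M²`, with equality iff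
`φ = arcsin (sin φ_p / cos θ_q)` and `θ = θ_q`. -/
theorem abs_kpcFactor_le_max (M : ℕ) (hM : 2 ≤ M) (φp θq φ θ : ℝ)
    (hφp : φp ∈ Set.Ioo (-(Real.pi / 2)) (Real.pi / 2))
    (hθq : θq ∈ Set.Ioo (-(Real.pi / 2)) (Real.pi / 2))
    (hle : |Real.sin φp| ≤ Real.cos θq)
    (hφ : φ ∈ Set.Icc (-(Real.pi / 2)) (Real.pi / 2))
    (hθ : θ ∈ Set.Icc (-(Real.pi / 2)) (Real.pi / 2)) :
    ‖kpcFactor M φ θ φp θq‖ ≤ (M : ℝ) ^ 2 ∧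
      (‖kpcFactor M φ θ φp θq‖ = (M : ℝ) ^ 2 ↔
        φ = Real.arcsin (Real.sin φp / Real.cos θq) ∧ θ = θq) := by
  have hMpos : (0 : ℝ) < M := by positivity
  set x1 := Real.cos θ * Real.sin φ - Real.sin φp with hx1def
  set x2 := Real.sin θ - Real.sin θq with hx2def
  -- |kpcFactor| = |S1| * |S2|
  have hkey : ‖kpcFactor M φ θ φp θq‖
      = ‖expSum M x1‖ * ‖expSum M x2‖ := by
    unfold kpcFactor dirichletKernel
    rw [show (∑ m ∈ Finset.range M, Complex.exp (Complex.I * (Real.pi : ℂ) * (m : ℂ) * (x1 : ℂ))) = expSum M x1 from rfl,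
        show (∑ m ∈ Finset.range M, Complex.exp (Complex.I * (Real.pi : ℂ) * (m : ℂ) * (x2 : ℂ))) = expSum M x2 from rfl]
    simp only [norm_mul, norm_pow, norm_div, norm_one, Complex.norm_natCast]
    field_simp
  have hle1 := expSum_abs_le M x1
  have hle2 := expSum_abs_le M x2
  have hnn1 := norm_nonneg (expSum M x1)
  have hnn2 := norm_nonneg (expSum M x2)
  have hbound : ‖kpcFactor M φ θ φp θq‖ ≤ (M : ℝ) ^ 2 := by
    rw [hkey]; nlinarith
  refine ⟨hbound, ?_⟩
  -- strict bounds on x1, x2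
  have hcosq : 0 < Real.cos θq := Real.cos_pos_of_mem_Ioo hθq
  have hsinp_lt : Real.sin φp < 1 := by
    rw [← Real.sin_pi_div_two]
    exact Real.strictMonoOn_sin ⟨hφp.1.le, hφp.2.le⟩
      (Set.mem_Icc.mpr ⟨by linarith [Real.pi_pos], le_refl _⟩) hφp.2
  have hsinp_gt : -1 < Real.sin φp := by
    rw [show (-1 : ℝ) = Real.sin (-(Real.pi/2)) by simp]
    exact Real.strictMonoOn_sin (Set.mem_Icc.mpr ⟨le_refl _, by linarith [Real.pi_pos]⟩)
      ⟨hφp.1.le, hφp.2.le⟩ hφp.1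
  have hsinq_lt : Real.sin θq < 1 := by
    rw [← Real.sin_pi_div_two]
    exact Real.strictMonoOn_sin ⟨hθq.1.le, hθq.2.le⟩
      (Set.mem_Icc.mpr ⟨by linarith [Real.pi_pos], le_refl _⟩) hθq.2
  have hsinq_gt : -1 < Real.sin θq := by
    rw [show (-1 : ℝ) = Real.sin (-(Real.pi/2)) by simp]
    exact Real.strictMonoOn_sin (Set.mem_Icc.mpr ⟨le_refl _, by linarith [Real.pi_pos]⟩)
      ⟨hθq.1.le, hθq.2.le⟩ hθq.1
  have hx1lt : |x1| < 2 := by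
    have h1 : |Real.cos θ * Real.sin φ| ≤ 1 := by
      rw [abs_mul]
      exact mul_le_one₀ (Real.abs_cos_le_one θ) (abs_nonneg _) (Real.abs_sin_le_one φ)
    have := abs_le.mp h1
    rw [hx1def, abs_lt]; constructor <;> nlinarith
  have hx2lt : |x2| < 2 := by
    have h1 := Real.neg_one_le_sin θ
    have h2 := Real.sin_le_one θ
    rw [hx2def, abs_lt]; constructor <;> nlinarith
  -- equality of product iff both sums maximal
  have hprod : ‖kpcFactor M φ θ φp θq‖ = (M : ℝ) ^ 2 ↔
      (‖expSum M x1‖ = M ∧ ‖expSum M x2‖ = M) := by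
    rw [hkey]
    constructor
    · intro h
      constructor <;> nlinarith
    · rintro ⟨h1, h2⟩; rw [h1, h2]; ring
  rw [hprod]
  -- translate maximality to x = 0
  have hiff1 : ‖expSum M x1‖ = M ↔ x1 = 0 := by
    constructor
    · exact x_eq_zero M hM x1 hx1lt
    · intro h; rw [h, expSum_zero]; simp
  have hiff2 : ‖expSum M x2‖ = M ↔ x2 = 0 := by
    constructor
    · exact x_eq_zero M hM x2 hx2lt
    · intro h; rw [h, expSum_zero]; simp
  rw [hiff1, hiff2]
  -- translate to angle conditions
  constructor
  · rintro ⟨h1, h2⟩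
    have hθeq : θ = θq := by
      apply Real.injOn_sin hθ ⟨hθq.1.le, hθq.2.le⟩
      rw [hx2def] at h2; linarith
    have hsinφ : Real.sin φ = Real.sin φp / Real.cos θq := by
      rw [hx1def, hθeq] at h1
      field_simp
      linarith
    refine ⟨?_, hθeq⟩
    rw [← hsinφ, Real.arcsin_sin hφ.1 hφ.2]
  · rintro ⟨hφeq, hθeq⟩
    have hr : -1 ≤ Real.sin φp / Real.cos θq ∧ Real.sin φp / Real.cos θq ≤ 1 := by
      rw [← abs_le, abs_div, abs_of_pos hcosq]
      exact div_le_one_of_le₀ hle hcosq.le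
    have hsinφ : Real.sin φ = Real.sin φp / Real.cos θq := by
      rw [hφeq, Real.sin_arcsin hr.1 hr.2]
    constructor
    · rw [hx1def, hθeq, hsinφ]
      field_simp
      ring
    · rw [hx2def, hθeq]; ring
end

section
/- Let M ≥ 3 be an integer. For integers p and q, define the orientation angles ϑ_q = q·arcsin(2/M) and η_{p,q} = p·arcsin(2/(M·cos ϑ_q)), and the corresponding unit vector u(η,ϑ) = (cos ϑ·cos η, cos ϑ·sin η, sin ϑ) ∈ ℝ³. Suppose (p_a, q_a) ≠ (p_b, q_b) are two index pairs such that the elevation angles satisfy |ϑ_{q_a}|, |ϑ_{q_b}| ≤ π/2, the azimuth angles satisfy |η_{p_a,q_a}|, |η_{p_b,q_b}| ≤ π/2, and whenever M·cos ϑ_q < 2 the corresponding azimuth index p is 0 (so that arcsin(2/(M·cos ϑ_q)) is only invoked when it is defined). Then the inner product of the two orientation vectors satisfies ⟨u(η_{p_a,q_a}, ϑ_{q_a}), u(η_{p_b,q_b}, ϑ_{q_b})⟩ ≤ √(1 − 4/M²); equivalently, the angle between any two distinct sUPA orientations of the spherical DCAA design is at least arcsin(2/M). -/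
open Real

/-- Elevation orientation angles of the spherical DCAA: `ϑ_q = q·arcsin(2/M)`. -/
noncomputable def dcaaElev (M : ℕ) (q : ℤ) : ℝ := q * Real.arcsin (2 / M)

/-- Azimuth orientation angles of the spherical DCAA:
`η_{p,q} = p·arcsin(2/(M cos ϑ_q))`. -/
noncomputable def dcaaAzim (M : ℕ) (p q : ℤ) : ℝ :=
  p * Real.arcsin (2 / (M * Real.cos (dcaaElev M q)))

/-- The orientation unit vector `u(η,ϑ) = (cos ϑ cos η, cos ϑ sin η, sin ϑ)`. -/
noncomputable def orientVec (η ϑ : ℝ) : EuclideanSpace ℝ (Fin 3) :=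
  (WithLp.equiv 2 (Fin 3 → ℝ)).symm
    ![Real.cos ϑ * Real.cos η, Real.cos ϑ * Real.sin η, Real.sin ϑ]

lemma inner_orientVec (η1 ϑ1 η2 ϑ2 : ℝ) :
    (inner ℝ (orientVec η1 ϑ1) (orientVec η2 ϑ2) : ℝ) =
      Real.cos ϑ1 * Real.cos ϑ2 * Real.cos (η1 - η2) + Real.sin ϑ1 * Real.sin ϑ2 := by
  simp [orientVec, PiLp.inner_apply, Fin.sum_univ_three, Real.cos_sub]
  ring

lemma dcaa_cos_step_le {s x : ℝ} (hs0 : 0 ≤ s) (hx : s ≤ |x|) (hxpi : |x| ≤ Real.pi) :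
    Real.cos x ≤ Real.cos s := by
  rw [← Real.cos_abs x]
  exact Real.cos_le_cos_of_nonneg_of_le_pi hs0 hxpi hx

lemma dcaa_alg_key (a c v x : ℝ) (ha0 : 0 ≤ a) (hc0 : 0 ≤ c) (hac : a ≤ c ^ 2) (hc1 : c ≤ 1)
    (hv0 : 0 ≤ v) (hv2 : v ^ 2 = 1 - a) (hv1 : v ≤ 1) (hx0 : 0 ≤ x)
    (hx2 : x ^ 2 = c ^ 2 * (c ^ 2 - a)) : x + 1 - c ^ 2 ≤ v := by
  have hvge : 1 - c ^ 2 ≤ v := by nlinarith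
  nlinarith [mul_nonneg (sub_nonneg.2 hc1) (sq_nonneg (v - 1)),
    sq_nonneg (v - (1 - c ^ 2) - x), sq_nonneg (v - (1 - c ^ 2) + x),
    mul_nonneg hx0 (sub_nonneg.2 hvge)]

/-- Abstract arithmetic core of the same-elevation-layer case. -/
lemma dcaa_case_same (m c sϑ C : ℝ) (hm : 3 ≤ m) (hc2 : 2 ≤ m * c) (hc1 : c ≤ 1)
    (hsc : Real.sin 0 = Real.sin 0) (hpyth : sϑ ^ 2 + c ^ 2 = 1)
    (hC : C ≤ Real.sqrt (1 - (2 / (m * c)) ^ 2)) :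
    c * c * C + sϑ * sϑ ≤ Real.sqrt (1 - 4 / m ^ 2) := by
  have hm0 : (0 : ℝ) < m := by linarith
  have hc0 : (0 : ℝ) < c := by nlinarith
  have hmc0 : (0 : ℝ) < m * c := by positivity
  have hx1 : 2 / (m * c) ≤ 1 := by rw [div_le_one hmc0]; linarith
  have hx0 : (0 : ℝ) ≤ 2 / (m * c) := by positivity
  have hw0 : (0 : ℝ) ≤ Real.sqrt (1 - (2 / (m * c)) ^ 2) := Real.sqrt_nonneg _
  have hw2 : (Real.sqrt (1 - (2 / (m * c)) ^ 2)) ^ 2 = 1 - (2 / (m * c)) ^ 2 :=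
    Real.sq_sqrt (by nlinarith)
  set w := Real.sqrt (1 - (2 / (m * c)) ^ 2) with hw
  have h2mc : 2 / m ≤ c := by rw [div_le_iff₀ hm0]; nlinarith
  have ha : (2 / m) ^ 2 ≤ c ^ 2 := pow_le_pow_left₀ (by positivity) h2mc 2
  have h2m1 : 2 / m ≤ 1 := by rw [div_le_one hm0]; linarith
  have h2m0 : (0 : ℝ) ≤ 2 / m := by positivity
  have h4 : 1 - 4 / m ^ 2 = 1 - (2 / m) ^ 2 := by rw [div_pow]; norm_num
  rw [h4]
  have hv0 := Real.sqrt_nonneg (1 - (2 / m) ^ 2)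
  have hv2 : (Real.sqrt (1 - (2 / m) ^ 2)) ^ 2 = 1 - (2 / m) ^ 2 :=
    Real.sq_sqrt (by nlinarith)
  have hv1 : Real.sqrt (1 - (2 / m) ^ 2) ≤ 1 := Real.sqrt_le_one.2 (by nlinarith)
  have hxsq : (c ^ 2 * w) ^ 2 = c ^ 2 * (c ^ 2 - (2 / m) ^ 2) := by
    rw [mul_pow, hw2]
    field_simp
  have hkey := dcaa_alg_key ((2 / m) ^ 2) c (Real.sqrt (1 - (2 / m) ^ 2)) (c ^ 2 * w)
    (by positivity) hc0.le ha hc1 hv0 hv2 hv1 (by positivity) hxsq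
  nlinarith [mul_le_mul_of_nonneg_left hC (by positivity : (0 : ℝ) ≤ c * c)]

/-- Minimum angular separation of the spherical DCAA design: for `M ≥ 3` and two distinct
index pairs `(p_a,q_a) ≠ (p_b,q_b)` with elevations and azimuths within `[−π/2, π/2]`
(and azimuth index forced to `0` whenever `M cos ϑ_q < 2`), the inner product of the two
orientation unit vectors is at most `√(1 − 4/M²)`; i.e., the angle between any two
distinct sUPA orientations is at least `arcsin(2/M)`. -/
theorem dcaa_min_angle_separation (M : ℕ) (hM : 3 ≤ M)
    (pa qa pb qb : ℤ) (hne : (pa, qa) ≠ (pb, qb))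
    (hϑa : |dcaaElev M qa| ≤ Real.pi / 2) (hϑb : |dcaaElev M qb| ≤ Real.pi / 2)
    (hηa : |dcaaAzim M pa qa| ≤ Real.pi / 2) (hηb : |dcaaAzim M pb qb| ≤ Real.pi / 2)
    (hpa : (M : ℝ) * Real.cos (dcaaElev M qa) < 2 → pa = 0)
    (hpb : (M : ℝ) * Real.cos (dcaaElev M qb) < 2 → pb = 0) :
    (inner ℝ (orientVec (dcaaAzim M pa qa) (dcaaElev M qa))
        (orientVec (dcaaAzim M pb qb) (dcaaElev M qb)) : ℝ) ≤
      Real.sqrt (1 - 4 / (M : ℝ) ^ 2) := by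
  have hM3 : (3 : ℝ) ≤ (M : ℝ) := by exact_mod_cast hM
  have hMpos : (0 : ℝ) < M := by linarith
  have h2M0 : (0 : ℝ) ≤ 2 / M := by positivity
  have h2M1 : (2 : ℝ) / M ≤ 1 := by rw [div_le_one hMpos]; linarith
  have hs0 : 0 ≤ Real.arcsin (2 / (M : ℝ)) := Real.arcsin_nonneg.2 h2M0
  have hcoss : Real.cos (Real.arcsin (2 / (M : ℝ))) = Real.sqrt (1 - 4 / (M : ℝ) ^ 2) := by
    rw [Real.cos_arcsin, div_pow]
    norm_num
  rw [inner_orientVec]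
  have hca : 0 ≤ Real.cos (dcaaElev M qa) :=
    Real.cos_nonneg_of_mem_Icc ⟨by linarith [(abs_le.1 hϑa).1], (abs_le.1 hϑa).2⟩
  have hcb : 0 ≤ Real.cos (dcaaElev M qb) :=
    Real.cos_nonneg_of_mem_Icc ⟨by linarith [(abs_le.1 hϑb).1], (abs_le.1 hϑb).2⟩
  rcases eq_or_ne qa qb with hq | hq
  · -- same elevation layer; azimuth indices differ
    have hp : pa ≠ pb := by
      intro hp; exact hne (by rw [hp, hq])
    subst hq
    have hc2 : (2 : ℝ) ≤ (M : ℝ) * Real.cos (dcaaElev M qa) := by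
      by_contra h
      push_neg at h
      exact hp (by rw [hpa h, hpb h])
    have hcapos : (0 : ℝ) < Real.cos (dcaaElev M qa) := by nlinarith
    have hmc0 : (0 : ℝ) < (M : ℝ) * Real.cos (dcaaElev M qa) := by positivity
    have hxle1 : (2 : ℝ) / ((M : ℝ) * Real.cos (dcaaElev M qa)) ≤ 1 := by
      rw [div_le_one hmc0]; linarith
    have hx0' : (0 : ℝ) ≤ 2 / ((M : ℝ) * Real.cos (dcaaElev M qa)) := by positivity
    have ht0 : 0 ≤ Real.arcsin (2 / ((M : ℝ) * Real.cos (dcaaElev M qa))) :=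
      Real.arcsin_nonneg.2 hx0'
    have hΔ : dcaaAzim M pa qa - dcaaAzim M pb qa =
        ((pa - pb : ℤ) : ℝ) * Real.arcsin (2 / ((M : ℝ) * Real.cos (dcaaElev M qa))) := by
      unfold dcaaAzim
      push_cast
      ring
    have hcosΔ : Real.cos (dcaaAzim M pa qa - dcaaAzim M pb qa) ≤
        Real.cos (Real.arcsin (2 / ((M : ℝ) * Real.cos (dcaaElev M qa)))) := by
      apply dcaa_cos_step_le ht0
      · rw [hΔ, abs_mul, abs_of_nonneg ht0]
        have h1 : (1 : ℝ) ≤ |((pa - pb : ℤ) : ℝ)| := by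
          rw [← Int.cast_abs]
          exact_mod_cast Int.one_le_abs (sub_ne_zero.mpr hp)
        nlinarith
      · calc |dcaaAzim M pa qa - dcaaAzim M pb qa|
            ≤ |dcaaAzim M pa qa| + |dcaaAzim M pb qa| := abs_sub _ _
          _ ≤ Real.pi := by linarith
    rw [Real.cos_arcsin] at hcosΔ
    exact dcaa_case_same (M : ℝ) (Real.cos (dcaaElev M qa)) (Real.sin (dcaaElev M qa))
      (Real.cos (dcaaAzim M pa qa - dcaaAzim M pb qa)) hM3 hc2
      (Real.cos_le_one _) rfl (Real.sin_sq_add_cos_sq _) hcosΔ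
  · -- different elevation layers
    have hΔϑ : dcaaElev M qa - dcaaElev M qb =
        ((qa - qb : ℤ) : ℝ) * Real.arcsin (2 / (M : ℝ)) := by
      unfold dcaaElev
      push_cast
      ring
    have hcosΔ : Real.cos (dcaaElev M qa - dcaaElev M qb) ≤
        Real.cos (Real.arcsin (2 / (M : ℝ))) := by
      apply dcaa_cos_step_le hs0
      · rw [hΔϑ, abs_mul, abs_of_nonneg hs0]
        have h1 : (1 : ℝ) ≤ |((qa - qb : ℤ) : ℝ)| := by
          rw [← Int.cast_abs]
          exact_mod_cast Int.one_le_abs (sub_ne_zero.mpr hq)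
        nlinarith
      · calc |dcaaElev M qa - dcaaElev M qb| ≤ |dcaaElev M qa| + |dcaaElev M qb| := abs_sub _ _
          _ ≤ Real.pi := by linarith
    rw [Real.cos_sub] at hcosΔ
    rw [← hcoss]
    nlinarith [mul_nonneg hca hcb,
      Real.cos_le_one (dcaaAzim M pa qa - dcaaAzim M pb qb)]
end

section
/- Let M ≥ 3 be an integer. The function f(ϑ) = cos²ϑ·√(1 − 4/(M²·cos²ϑ)) + sin²ϑ is strictly decreasing on the interval [0, arccos(2/M)]. -/
open Real

lemma dcaa_core (a c1 c2 : ℝ) (ha : 0 < a) (h1 : a ≤ c1) (h12 : c1 < c2) :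
    Real.sqrt (c1^2 - a*c1) + (1 - c1) < Real.sqrt (c2^2 - a*c2) + (1 - c2) := by
  have hs1 : Real.sqrt (c1^2 - a*c1) ^ 2 = c1^2 - a*c1 :=
    Real.sq_sqrt (by nlinarith)
  have hs1nn : 0 ≤ Real.sqrt (c1^2 - a*c1) := Real.sqrt_nonneg _
  have hlt : Real.sqrt (c1^2 - a*c1) < c1 - a/2 := by
    nlinarith [hs1, hs1nn]
  have hkey : Real.sqrt (c1^2 - a*c1) + (c2 - c1) < Real.sqrt (c2^2 - a*c2) := by
    rw [Real.lt_sqrt (by linarith)]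
    nlinarith [mul_pos (sub_pos.2 h12) (show (0:ℝ) < 2*c1 - a by linarith)]
  linarith

lemma dcaa_rw (m c : ℝ) (hm : 0 < m) (hc : 0 < c) :
    c * Real.sqrt (1 - 4 / (m^2 * c)) = Real.sqrt (c^2 - 4/m^2 * c) := by
  rw [show c^2 - 4/m^2 * c = c^2 * (1 - 4/(m^2*c)) by field_simp,
    Real.sqrt_mul (sq_nonneg c), Real.sqrt_sq hc.le]

/-- For an integer `M ≥ 3`, the function
`f(ϑ) = cos²ϑ·√(1 − 4/(M² cos²ϑ)) + sin²ϑ` is strictly decreasing on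
`[0, arccos(2/M)]`. -/
theorem dcaa_cos_angle_strictAntiOn (M : ℕ) (hM : 3 ≤ M) :
    StrictAntiOn
      (fun ϑ : ℝ =>
        Real.cos ϑ ^ 2 * Real.sqrt (1 - 4 / ((M : ℝ) ^ 2 * Real.cos ϑ ^ 2)) +
          Real.sin ϑ ^ 2)
      (Set.Icc 0 (Real.arccos (2 / M))) := by
  intro x hx y hy hxy
  have hM' : (3:ℝ) ≤ (M:ℝ) := by exact_mod_cast hM
  have hMpos : (0:ℝ) < (M:ℝ) := by linarith
  have h2M1 : 2 / (M:ℝ) ≤ 1 := by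
    rw [div_le_one hMpos]; linarith
  have h2Mpos : (0:ℝ) < 2 / (M:ℝ) := by positivity
  have harc_pi : Real.arccos (2 / M) ≤ π := Real.arccos_le_pi _
  have hyπ : y ≤ π := hy.2.trans harc_pi
  have hcosy : 2 / (M:ℝ) ≤ Real.cos y := by
    calc 2 / (M:ℝ) = Real.cos (Real.arccos (2/M)) :=
          (Real.cos_arccos (by linarith) h2M1).symm
      _ ≤ Real.cos y := Real.cos_le_cos_of_nonneg_of_le_pi hy.1 harc_pi hy.2
  have hcosxy : Real.cos y < Real.cos x :=
    Real.strictAntiOn_cos ⟨hx.1, hx.2.trans harc_pi⟩ ⟨hy.1, hyπ⟩ hxy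
  have hcy : 0 < Real.cos y := lt_of_lt_of_le h2Mpos hcosy
  have hcx : 0 < Real.cos x := lt_trans hcy hcosxy
  have hc12 : Real.cos y ^ 2 < Real.cos x ^ 2 := by nlinarith
  have ha1 : 4 / (M:ℝ)^2 ≤ Real.cos y ^ 2 := by
    have h2 : (2 / (M:ℝ))^2 ≤ Real.cos y ^ 2 := by nlinarith
    calc 4 / (M:ℝ)^2 = (2 / (M:ℝ))^2 := by ring
      _ ≤ _ := h2
  simp only
  rw [dcaa_rw (M:ℝ) _ hMpos (by positivity), dcaa_rw (M:ℝ) _ hMpos (by positivity),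
    Real.sin_sq x, Real.sin_sq y]
  exact dcaa_core (4/(M:ℝ)^2) _ _ (by positivity) ha1 hc12
end

section
/- Let M ≥ 3 be an integer. For every ϑ ∈ [0, arccos(2/M)], one has cos²ϑ·√(1 − 4/(M²·cos²ϑ)) + sin²ϑ ≤ √(1 − 4/M²), with equality if and only if ϑ = 0. Equivalently, the angle between two sUPA orientations at the same elevation ϑ whose azimuths differ by arcsin(2/(M·cos ϑ)) is at least arcsin(2/M). -/
open Real

set_option maxHeartbeats 1000000 in
/-- For an integer `M ≥ 3` and every `ϑ ∈ [0, arccos(2/M)]`,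
`cos²ϑ·√(1 − 4/(M² cos²ϑ)) + sin²ϑ ≤ √(1 − 4/M²)`, with equality iff `ϑ = 0`;
i.e., the angle between two same-elevation sUPA orientations whose azimuths differ by
`arcsin(2/(M cos ϑ))` is at least `arcsin(2/M)`. -/
theorem dcaa_same_elevation_cos_angle_le (M : ℕ) (hM : 3 ≤ M) (ϑ : ℝ)
    (hϑ : ϑ ∈ Set.Icc 0 (Real.arccos (2 / M))) :
    Real.cos ϑ ^ 2 * Real.sqrt (1 - 4 / ((M : ℝ) ^ 2 * Real.cos ϑ ^ 2)) + Real.sin ϑ ^ 2 ≤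
        Real.sqrt (1 - 4 / (M : ℝ) ^ 2) ∧
      (Real.cos ϑ ^ 2 * Real.sqrt (1 - 4 / ((M : ℝ) ^ 2 * Real.cos ϑ ^ 2)) + Real.sin ϑ ^ 2 =
          Real.sqrt (1 - 4 / (M : ℝ) ^ 2) ↔ ϑ = 0) := by
  have hM3 : (3 : ℝ) ≤ (M : ℝ) := by exact_mod_cast hM
  have hMpos : (0 : ℝ) < (M : ℝ) := by linarith
  set a : ℝ := 4 / (M : ℝ) ^ 2 with ha_def
  have hapos : 0 < a := by positivity
  have ha1 : a ≤ 4 / 9 := by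
    rw [ha_def, div_le_div_iff₀ (by positivity) (by norm_num)]
    nlinarith
  obtain ⟨hϑ0, hϑ1⟩ := hϑ
  have h2M1 : 2 / (M:ℝ) ≤ 1 := by
    rw [div_le_one hMpos]; linarith
  set c : ℝ := Real.cos ϑ with hc_def
  have hcge : 2 / (M:ℝ) ≤ c := by
    have := Real.cos_arccos (le_trans (by norm_num : (-1:ℝ) ≤ 0) (by positivity)) h2M1
    calc 2 / (M:ℝ) = Real.cos (Real.arccos (2 / M)) := this.symm
      _ ≤ c := Real.cos_le_cos_of_nonneg_of_le_pi hϑ0 (Real.arccos_le_pi _) hϑ1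
  have hcpos : 0 < c := lt_of_lt_of_le (by positivity) hcge
  have hcle : c ≤ 1 := Real.cos_le_one ϑ
  have hac : a ≤ c ^ 2 := by
    have h1 : (2 / (M:ℝ)) ^ 2 ≤ c ^ 2 := by
      exact pow_le_pow_left₀ (by positivity) hcge 2
    have h2 : a = (2 / (M:ℝ)) ^ 2 := by rw [ha_def]; field_simp; norm_num
    linarith
  -- rewrite the inner sqrt
  have hrw : 1 - 4 / ((M : ℝ) ^ 2 * c ^ 2) = (c ^ 2 - a) / c ^ 2 := by
    rw [ha_def]; field_simp
  set s : ℝ := Real.sqrt (c ^ 2 - a) with hs_def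
  have hs0 : 0 ≤ s := Real.sqrt_nonneg _
  have hs2 : s ^ 2 = c ^ 2 - a := Real.sq_sqrt (by linarith)
  set t : ℝ := Real.sqrt (1 - a) with ht_def
  have ht0 : 0 ≤ t := Real.sqrt_nonneg _
  have ht2 : t ^ 2 = 1 - a := Real.sq_sqrt (by linarith)
  have ht1 : t < 1 := by nlinarith
  have hLHS : c ^ 2 * Real.sqrt (1 - 4 / ((M : ℝ) ^ 2 * c ^ 2)) = c * s := by
    rw [hrw, Real.sqrt_div (by linarith), Real.sqrt_sq hcpos.le, hs_def]
    field_simp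
  have hsin : Real.sin ϑ ^ 2 = 1 - c ^ 2 := by
    have := Real.sin_sq_add_cos_sq ϑ; linarith
  have hRHS : Real.sqrt (1 - 4 / (M : ℝ) ^ 2) = t := rfl
  clear_value a c s t
  -- key facts
  have hprod : (t - c * s) * (t + c * s) = (1 - c ^ 2) * (1 + c ^ 2 - a) := by
    linear_combination ht2 - c ^ 2 * hs2
  have hDle : t + c * s ≤ 1 + c ^ 2 - a := by
    nlinarith [sq_nonneg (1 - t), sq_nonneg (c - s)]
  have htpos : 0 < t := by nlinarith
  have hden : 0 < t + c * s := by
    have := mul_nonneg hcpos.le hs0; linarith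
  have hc2nn : (0:ℝ) ≤ 1 - c ^ 2 := sub_nonneg.mpr (pow_le_one₀ hcpos.le hcle)
  -- main inequality: c*s + (1 - c^2) ≤ t
  have key : c * s + (1 - c ^ 2) ≤ t := by
    have h1 : (1 - c ^ 2) * (t + c * s) ≤ (t - c * s) * (t + c * s) := by
      rw [hprod]; exact mul_le_mul_of_nonneg_left hDle hc2nn
    have h2 : 1 - c ^ 2 ≤ t - c * s := le_of_mul_le_mul_right h1 hden
    linarith
  constructor
  · rw [hLHS, hsin]; linarith
  · rw [hLHS, hsin]
    constructor
    · intro heq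
      by_contra hne
      have hϑpos : 0 < ϑ := lt_of_le_of_ne hϑ0 (Ne.symm hne)
      have hϑpi : ϑ ≤ π := le_trans hϑ1 (Real.arccos_le_pi _)
      have hc1 : c < 1 := by
        have := Real.cos_lt_cos_of_nonneg_of_le_pi le_rfl hϑpi hϑpos
        simpa [hc_def] using this
      have hDlt : t + c * s < 1 + c ^ 2 - a := by
        nlinarith [sq_nonneg (c - s), mul_pos (sub_pos.mpr ht1) (sub_pos.mpr ht1)]
      have hc2pos : (0:ℝ) < 1 - c ^ 2 := by nlinarith
      have h1 : (1 - c ^ 2) * (t + c * s) < (t - c * s) * (t + c * s) := by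
        rw [hprod]; exact (mul_lt_mul_iff_right₀ hc2pos).mpr hDlt
      have h2 : 1 - c ^ 2 < t - c * s := lt_of_mul_lt_mul_right h1 hden.le
      linarith
    · intro h
      have hc1 : c = 1 := by rw [hc_def, h, Real.cos_zero]
      have hst : s = t := by rw [hs_def, ht_def, hc1]; norm_num
      rw [hc1, hst]; ring
end
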